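/- arXiv:1511.06999 — 2 statements merged into one kernel-verified Lean document; each statement's English description precedes it below -/
import Mathlib

section
/- Suppose assumptions (A1), (A2), and (A3) hold. Then there exists a constant C > 0, depending only on γ, α, the constants of (A1)–(A2), and on the C² norm of V, such that for every 0 < ε ≤ 1 and every solution (u, m) of Problem 1, the second-order estimate ∫₀¹ (H''(u')·(u'')²·m + α·m^{α−1}·(m')²) dx + ε ∫₀¹ ((m')² + (m'')² + (u')² + (u'')²) dx ≤ C holds. Moreover, if in addition H is convex (assumption (A4)), then ∫₀¹ α·m^{α−1}·(m')² dx + ε ∫₀¹ ((m')² + (m'')² + (u')² + (u'')²) dx ≤ C. -/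
open Set intervalIntegral

noncomputable section

/-- `f : ℝ → ℝ` is ½-Hölder continuous: there is `K ≥ 0` with
`|f x - f y| ≤ K * |x - y| ^ (1/2)` for all `x y`. -/
def IsHolderHalf (f : ℝ → ℝ) : Prop :=
  ∃ K : ℝ, 0 ≤ K ∧ ∀ x y : ℝ, |f x - f y| ≤ K * |x - y| ^ ((1 : ℝ) / 2)

/-- `f` is a 1-periodic function of class `C²` (a `C²` function on the torus `𝕋`). -/
def MemC2T (f : ℝ → ℝ) : Prop :=
  Function.Periodic f 1 ∧ ContDiff ℝ 2 f

/-- `f ∈ C^{2,1/2}(𝕋)`: 1-periodic, of class `C²`, with ½-Hölder continuous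
second derivative. -/
def MemC2HalfT (f : ℝ → ℝ) : Prop :=
  MemC2T f ∧ IsHolderHalf (deriv (deriv f))

/-- `(u, m)` is a solution of Problem 1 with Hamiltonian `H`, potential `V`,
exponent `α` and parameter `ε`: `u, m` are 1-periodic `C²` functions, `m > 0`
everywhere, and the system
`u - u'' + H(u') + V = m^α + ε (m - m'')`,
`m - m'' - (H'(u') m)' = 1 - ε (u - u'')`
holds pointwise. -/
def SolvesMFG (H V : ℝ → ℝ) (α ε : ℝ) (u m : ℝ → ℝ) : Prop :=
  MemC2T u ∧ MemC2T m ∧ (∀ x, 0 < m x) ∧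
  (∀ x : ℝ, u x - deriv (deriv u) x + H (deriv u x) + V x
      = m x ^ α + ε * (m x - deriv (deriv m) x)) ∧
  (∀ x : ℝ, m x - deriv (deriv m) x
      - deriv (fun y => deriv H (deriv u y) * m y) x
      = 1 - ε * (u x - deriv (deriv u) x))

/-- A bound `KV` on the `C²` norm of `V`. -/
def C2NormBound (KV : ℝ) (V : ℝ → ℝ) : Prop :=
  ∀ x : ℝ, |V x| ≤ KV ∧ |deriv V x| ≤ KV ∧ |deriv (deriv V) x| ≤ KV


section SecondOrderAuxLemmas

open Filter

private lemma c2_facts' {f : ℝ → ℝ} (hf : ContDiff ℝ 2 f) :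
    Differentiable ℝ f ∧ Differentiable ℝ (deriv f) ∧ Continuous (deriv (deriv f)) := by
  have h2 : (2 : WithTop ℕ∞) = 1 + 1 := by norm_num
  rw [h2, contDiff_succ_iff_deriv] at hf
  obtain ⟨hd, -, h1⟩ := hf
  rw [contDiff_one_iff_deriv] at h1
  exact ⟨hd, h1.1, h1.2⟩

private lemma periodic_deriv' {f : ℝ → ℝ} (hp : Function.Periodic f 1) :
    Function.Periodic (deriv f) 1 := by
  intro x
  have h1 : deriv (fun y => f (y + 1)) x = deriv f (x + 1) := by
    simpa using deriv_comp_add_const f 1 x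
  have h2 : (fun y => f (y + 1)) = f := funext hp
  rw [h2] at h1
  exact h1.symm

private lemma monotone_deriv_nonneg' {g : ℝ → ℝ} (hm : Monotone g)
    (hd : Differentiable ℝ g) (x : ℝ) : 0 ≤ deriv g x := by
  have ht := (hd x).hasDerivAt
  rw [hasDerivAt_iff_tendsto_slope] at ht
  have ht2 : Tendsto (slope g x) (nhdsWithin x (Set.Ioi x)) (nhds (deriv g x)) :=
    ht.mono_left (nhdsWithin_mono _ (fun y hy => ne_of_gt hy))
  refine ge_of_tendsto ht2 ?_
  filter_upwards [self_mem_nhdsWithin] with y hy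
  rw [slope_def_field]
  exact div_nonneg (sub_nonneg.2 (hm (le_of_lt hy))) (sub_nonneg.2 (le_of_lt hy))

private lemma rpow_lower' (α κ : ℝ) (hα : 0 < α) (hκ : 0 < κ) :
    ∃ D : ℝ, 0 < D ∧ ∀ t : ℝ, 0 < t → κ * t - D ≤ t ^ α * (t - 1) := by
  set M : ℝ := max 2 ((2 * κ) ^ (1 / α)) with hMdef
  have hM2 : (2 : ℝ) ≤ M := le_max_left _ _
  have hM0 : (0 : ℝ) < M := by linarith
  refine ⟨M ^ α + κ * M + 1, by positivity, ?_⟩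
  intro t ht
  rcases le_or_gt t M with h | h
  · have h1 : t ^ α ≤ M ^ α := Real.rpow_le_rpow ht.le h hα.le
    have h2 : 0 ≤ t ^ α * t := mul_nonneg (Real.rpow_nonneg ht.le α) ht.le
    have hκt : κ * t ≤ κ * M := by nlinarith
    nlinarith
  · have hMα : 2 * κ ≤ M ^ α := by
      have hle : (2 * κ) ^ ((1:ℝ) / α) ≤ M := le_max_right _ _
      have h0 : (0:ℝ) ≤ 2 * κ := by linarith
      have hpow : ((2 * κ) ^ ((1:ℝ) / α)) ^ α = 2 * κ := by
        rw [← Real.rpow_mul h0, one_div, inv_mul_cancel₀ (ne_of_gt hα), Real.rpow_one]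
      calc 2 * κ = ((2 * κ) ^ ((1:ℝ) / α)) ^ α := hpow.symm
        _ ≤ M ^ α := Real.rpow_le_rpow (Real.rpow_nonneg h0 _) hle hα.le
    have htα : 2 * κ ≤ t ^ α :=
      le_trans hMα (Real.rpow_le_rpow hM0.le h.le hα.le)
    have h2t : 2 ≤ t := le_trans hM2 h.le
    nlinarith

private theorem identity1' (H V : ℝ → ℝ) (α ε : ℝ) (u m : ℝ → ℝ)
    (hH : ContDiff ℝ 2 H) (hV : ContDiff ℝ 2 V) (hVp : Function.Periodic V 1)
    (hs : SolvesMFG H V α ε u m) :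
    (∫ x in (0:ℝ)..1,
        (deriv (deriv H) (deriv u x) * (deriv (deriv u) x) ^ 2 * m x
          + α * m x ^ (α - 1) * (deriv m x) ^ 2
          + ε * ((deriv m x) ^ 2 + (deriv (deriv m) x) ^ 2
              + (deriv u x) ^ 2 + (deriv (deriv u) x) ^ 2)))
      = - ∫ x in (0:ℝ)..1, deriv (deriv V) x * m x := by
  obtain ⟨⟨hup, hu2⟩, ⟨hmp, hm2⟩, hmpos, heq1, heq2⟩ := hs
  obtain ⟨du, du', cu2⟩ := c2_facts' hu2
  obtain ⟨dm, dm', cm2⟩ := c2_facts' hm2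
  obtain ⟨dV, dV', cV2⟩ := c2_facts' hV
  obtain ⟨dH, dH', cH2⟩ := c2_facts' hH
  have cu := du.continuous
  have cu1 := du'.continuous
  have cm := dm.continuous
  have cm1 := dm'.continuous
  have cV := dV.continuous
  have cV1 := dV'.continuous
  have cH := dH.continuous
  have cH1 := dH'.continuous
  have cma : Continuous (fun x => m x ^ α) :=
    cm.rpow_const (fun x => Or.inl (ne_of_gt (hmpos x)))
  have cma1 : Continuous (fun x => m x ^ (α - 1)) :=
    cm.rpow_const (fun x => Or.inl (ne_of_gt (hmpos x)))
  have hu : ∀ x, HasDerivAt u (deriv u x) x := fun x => (du x).hasDerivAt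
  have hu1 : ∀ x, HasDerivAt (deriv u) (deriv (deriv u) x) x := fun x => (du' x).hasDerivAt
  have hm : ∀ x, HasDerivAt m (deriv m x) x := fun x => (dm x).hasDerivAt
  have hm1 : ∀ x, HasDerivAt (deriv m) (deriv (deriv m) x) x := fun x => (dm' x).hasDerivAt
  have hV0 : ∀ x, HasDerivAt V (deriv V x) x := fun x => (dV x).hasDerivAt
  have hV1 : ∀ x, HasDerivAt (deriv V) (deriv (deriv V) x) x := fun x => (dV' x).hasDerivAt
  have hHu : ∀ x, HasDerivAt (fun y => H (deriv u y))
      (deriv H (deriv u x) * deriv (deriv u) x) x :=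
    fun x => ((dH (deriv u x)).hasDerivAt).comp x (hu1 x)
  have hH'u : ∀ x, HasDerivAt (fun y => deriv H (deriv u y))
      (deriv (deriv H) (deriv u x) * deriv (deriv u) x) x :=
    fun x => ((dH' (deriv u x)).hasDerivAt).comp x (hu1 x)
  have hma : ∀ x, HasDerivAt (fun y => m y ^ α)
      (deriv m x * α * m x ^ (α - 1)) x :=
    fun x => (hm x).rpow_const (Or.inl (ne_of_gt (hmpos x)))
  set Φ : ℝ → ℝ := fun x => u x * deriv m x - deriv u x * m x + H (deriv u x) * deriv m x
      + V x * deriv m x - deriv V x * m x - m x ^ α * deriv m x - ε * (m x * deriv m x)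
      - ε * (u x * deriv u x) + deriv u x with hΦdef
  set E : ℝ → ℝ := fun x =>
      (u x * deriv (deriv m) x + deriv u x * deriv m x)
      - (deriv (deriv u) x * m x + deriv u x * deriv m x)
      + (deriv H (deriv u x) * deriv (deriv u) x * deriv m x + H (deriv u x) * deriv (deriv m) x)
      + (deriv V x * deriv m x + V x * deriv (deriv m) x)
      - (deriv (deriv V) x * m x + deriv V x * deriv m x)
      - (deriv m x * α * m x ^ (α - 1) * deriv m x + m x ^ α * deriv (deriv m) x)
      - ε * (deriv m x * deriv m x + m x * deriv (deriv m) x)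
      - ε * (deriv u x * deriv u x + u x * deriv (deriv u) x)
      + deriv (deriv u) x with hEdef
  have hΦ : ∀ x, HasDerivAt Φ (E x) x := by
    intro x
    have h := (((((((((hu x).mul (hm1 x)).sub ((hu1 x).mul (hm x))).add
        ((hHu x).mul (hm1 x))).add ((hV0 x).mul (hm1 x))).sub ((hV1 x).mul (hm x))).sub
        ((hma x).mul (hm1 x))).sub (((hm x).mul (hm1 x)).const_mul ε)).sub
        (((hu x).mul (hu1 x)).const_mul ε)).add (hu1 x)
    refine h.congr_deriv ?_
    simp only [hEdef]
    ring
  have cE : Continuous E := by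
    simp only [hEdef]
    fun_prop
  have hΦper : Φ 1 = Φ 0 := by
    have h1 : u 1 = u 0 := by simpa using hup 0
    have h2 : m 1 = m 0 := by simpa using hmp 0
    have h3 : deriv u 1 = deriv u 0 := by simpa using (periodic_deriv' hup) 0
    have h4 : deriv m 1 = deriv m 0 := by simpa using (periodic_deriv' hmp) 0
    have h5 : V 1 = V 0 := by simpa using hVp 0
    have h6 : deriv V 1 = deriv V 0 := by simpa using (periodic_deriv' hVp) 0
    simp only [hΦdef, h1, h2, h3, h4, h5, h6]
  have hintE : (∫ x in (0:ℝ)..1, E x) = 0 := by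
    rw [intervalIntegral.integral_eq_sub_of_hasDerivAt
      (fun x _ => hΦ x) (cE.intervalIntegrable _ _)]
    rw [hΦper]; ring
  have hpt : ∀ x, deriv (deriv H) (deriv u x) * (deriv (deriv u) x) ^ 2 * m x
      + α * m x ^ (α - 1) * (deriv m x) ^ 2
      + ε * ((deriv m x) ^ 2 + (deriv (deriv m) x) ^ 2
          + (deriv u x) ^ 2 + (deriv (deriv u) x) ^ 2)
      = -(E x) - deriv (deriv V) x * m x := by
    intro x
    have hd2 : deriv (fun y => deriv H (deriv u y) * m y) x
        = deriv (deriv H) (deriv u x) * deriv (deriv u) x * m x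
          + deriv H (deriv u x) * deriv m x := ((hH'u x).mul (hm x)).deriv
    have e1 := heq1 x
    have e2 := heq2 x
    rw [hd2] at e2
    simp only [hEdef]
    linear_combination e1 * (deriv (deriv m) x) - e2 * (deriv (deriv u) x)
  calc (∫ x in (0:ℝ)..1, _) = ∫ x in (0:ℝ)..1, (-(E x) - deriv (deriv V) x * m x) := by
        apply intervalIntegral.integral_congr
        intro x _
        exact hpt x
    _ = (∫ x in (0:ℝ)..1, -(E x)) - ∫ x in (0:ℝ)..1, deriv (deriv V) x * m x := by
        apply intervalIntegral.integral_sub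
        · exact (cE.neg).intervalIntegrable _ _
        · exact ((cV2.mul cm)).intervalIntegrable _ _
    _ = - ∫ x in (0:ℝ)..1, deriv (deriv V) x * m x := by
        rw [intervalIntegral.integral_neg, hintE]; ring

private theorem identity2' (H V : ℝ → ℝ) (α ε : ℝ) (u m : ℝ → ℝ)
    (hH : ContDiff ℝ 2 H) (hV : ContDiff ℝ 2 V)
    (hs : SolvesMFG H V α ε u m) :
    (∫ x in (0:ℝ)..1,
        (m x ^ α * (m x - 1) + ε * (m x ^ 2 - m x)
          + ε * ((deriv m x) ^ 2 + (u x) ^ 2 + (deriv u x) ^ 2)))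
      = ∫ x in (0:ℝ)..1,
          ((H (deriv u x) - deriv u x * deriv H (deriv u x)) * m x
            - H (deriv u x) + V x * (m x - 1)) := by
  obtain ⟨⟨hup, hu2⟩, ⟨hmp, hm2⟩, hmpos, heq1, heq2⟩ := hs
  obtain ⟨du, du', cu2⟩ := c2_facts' hu2
  obtain ⟨dm, dm', cm2⟩ := c2_facts' hm2
  obtain ⟨dV, dV', cV2⟩ := c2_facts' hV
  obtain ⟨dH, dH', cH2⟩ := c2_facts' hH
  have cu := du.continuous
  have cu1 := du'.continuous
  have cm := dm.continuous
  have cm1 := dm'.continuous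
  have cV := dV.continuous
  have cH := dH.continuous
  have cH1 := dH'.continuous
  have cma : Continuous (fun x => m x ^ α) :=
    cm.rpow_const (fun x => Or.inl (ne_of_gt (hmpos x)))
  have hu : ∀ x, HasDerivAt u (deriv u x) x := fun x => (du x).hasDerivAt
  have hu1 : ∀ x, HasDerivAt (deriv u) (deriv (deriv u) x) x := fun x => (du' x).hasDerivAt
  have hm : ∀ x, HasDerivAt m (deriv m x) x := fun x => (dm x).hasDerivAt
  have hm1 : ∀ x, HasDerivAt (deriv m) (deriv (deriv m) x) x := fun x => (dm' x).hasDerivAt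
  have hH'u : ∀ x, HasDerivAt (fun y => deriv H (deriv u y))
      (deriv (deriv H) (deriv u x) * deriv (deriv u) x) x :=
    fun x => ((dH' (deriv u x)).hasDerivAt).comp x (hu1 x)
  set Ψ : ℝ → ℝ := fun x => deriv m x * u x - deriv u x * m x + deriv u x
      + deriv H (deriv u x) * m x * u x + ε * (m x * deriv m x) - ε * deriv m x
      + ε * (u x * deriv u x) with hΨdef
  set F : ℝ → ℝ := fun x =>
      (deriv (deriv m) x * u x + deriv m x * deriv u x)
      - (deriv (deriv u) x * m x + deriv u x * deriv m x)
      + deriv (deriv u) x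
      + ((deriv (deriv H) (deriv u x) * deriv (deriv u) x * m x
          + deriv H (deriv u x) * deriv m x) * u x
        + deriv H (deriv u x) * m x * deriv u x)
      + ε * (deriv m x * deriv m x + m x * deriv (deriv m) x)
      - ε * deriv (deriv m) x
      + ε * (deriv u x * deriv u x + u x * deriv (deriv u) x) with hFdef
  have hΨ : ∀ x, HasDerivAt Ψ (F x) x := by
    intro x
    have h := (((((((hm1 x).mul (hu x)).sub ((hu1 x).mul (hm x))).add (hu1 x)).add
        ((((hH'u x).mul (hm x)).mul (hu x)))).add
        (((hm x).mul (hm1 x)).const_mul ε)).sub ((hm1 x).const_mul ε)).add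
        (((hu x).mul (hu1 x)).const_mul ε)
    exact h
  have cF : Continuous F := by
    simp only [hFdef]
    fun_prop
  have hΨper : Ψ 1 = Ψ 0 := by
    have h1 : u 1 = u 0 := by simpa using hup 0
    have h2 : m 1 = m 0 := by simpa using hmp 0
    have h3 : deriv u 1 = deriv u 0 := by simpa using (periodic_deriv' hup) 0
    have h4 : deriv m 1 = deriv m 0 := by simpa using (periodic_deriv' hmp) 0
    simp only [hΨdef, h1, h2, h3, h4]
  have hintF : (∫ x in (0:ℝ)..1, F x) = 0 := by
    rw [intervalIntegral.integral_eq_sub_of_hasDerivAt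
      (fun x _ => hΨ x) (cF.intervalIntegrable _ _)]
    rw [hΨper]; ring
  have hpt : ∀ x, m x ^ α * (m x - 1) + ε * (m x ^ 2 - m x)
      + ε * ((deriv m x) ^ 2 + (u x) ^ 2 + (deriv u x) ^ 2)
      = F x + ((H (deriv u x) - deriv u x * deriv H (deriv u x)) * m x
          - H (deriv u x) + V x * (m x - 1)) := by
    intro x
    have hd2 : deriv (fun y => deriv H (deriv u y) * m y) x
        = deriv (deriv H) (deriv u x) * deriv (deriv u) x * m x
          + deriv H (deriv u x) * deriv m x := ((hH'u x).mul (hm x)).deriv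
    have e1 := heq1 x
    have e2 := heq2 x
    rw [hd2] at e2
    simp only [hFdef]
    linear_combination e2 * (u x) - e1 * (m x - 1)
  have cG : Continuous (fun x => (H (deriv u x) - deriv u x * deriv H (deriv u x)) * m x
      - H (deriv u x) + V x * (m x - 1)) := by fun_prop
  calc (∫ x in (0:ℝ)..1, _) = ∫ x in (0:ℝ)..1,
        (F x + ((H (deriv u x) - deriv u x * deriv H (deriv u x)) * m x
          - H (deriv u x) + V x * (m x - 1))) := by
        apply intervalIntegral.integral_congr
        intro x _
        exact hpt x
    _ = (∫ x in (0:ℝ)..1, F x) + ∫ x in (0:ℝ)..1,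
          ((H (deriv u x) - deriv u x * deriv H (deriv u x)) * m x
            - H (deriv u x) + V x * (m x - 1)) := by
        apply intervalIntegral.integral_add
        · exact cF.intervalIntegrable _ _
        · exact cG.intervalIntegrable _ _
    _ = ∫ x in (0:ℝ)..1,
          ((H (deriv u x) - deriv u x * deriv H (deriv u x)) * m x
            - H (deriv u x) + V x * (m x - 1)) := by
        rw [hintF]; ring

end SecondOrderAuxLemmas

set_option maxHeartbeats 1000000 in
/-- Under assumptions (A1)–(A3), there is a constant `C > 0`,
depending only on `γ, α`, the constants of (A1)–(A2) and on the `C²` norm of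
`V`, such that for every `0 < ε ≤ 1` and every solution `(u, m)` of Problem 1,
the second-order estimate
`∫₀¹ (H''(u') u''² m + α m^{α-1} m'²) + ε ∫₀¹ (m'² + m''² + u'² + u''²) ≤ C`
holds; moreover, if in addition `H` is convex (A4), then
`∫₀¹ α m^{α-1} m'² + ε ∫₀¹ (m'² + m''² + u'² + u''²) ≤ C`. -/
theorem second_order_estimates
    (α γ C1 C2 C3 tC1 tC2 tC3 KV : ℝ)
    (hα : 0 < α) (hγ : 1 < γ)
    (hC1 : 0 < C1) (hC2 : 0 < C2) (hC3 : 0 < C3)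
    (htC1 : 0 < tC1) (htC2 : 0 < tC2) (htC3 : 0 < tC3) :
    ∃ C > 0, ∀ H V : ℝ → ℝ, ContDiff ℝ 2 H →
      Function.Periodic V 1 → ContDiff ℝ 2 V → C2NormBound KV V →
      (∀ p : ℝ, -C1 + C2 * |p| ^ γ ≤ H p ∧ H p ≤ C1 + C3 * |p| ^ γ) →
      (∀ p : ℝ, -tC1 + tC2 * |p| ^ γ ≤ p * deriv H p - H p ∧
          p * deriv H p - H p ≤ tC1 + tC3 * |p| ^ γ) →
      ∀ ε : ℝ, 0 < ε → ε ≤ 1 → ∀ u m : ℝ → ℝ, SolvesMFG H V α ε u m →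
        ((∫ x in (0:ℝ)..1,
            (deriv (deriv H) (deriv u x) * (deriv (deriv u) x) ^ 2 * m x
              + α * m x ^ (α - 1) * (deriv m x) ^ 2))
          + ε * (∫ x in (0:ℝ)..1,
              ((deriv m x) ^ 2 + (deriv (deriv m) x) ^ 2
                + (deriv u x) ^ 2 + (deriv (deriv u) x) ^ 2)) ≤ C)
        ∧ (ConvexOn ℝ Set.univ H →
            (∫ x in (0:ℝ)..1, α * m x ^ (α - 1) * (deriv m x) ^ 2)
              + ε * (∫ x in (0:ℝ)..1,
                  ((deriv m x) ^ 2 + (deriv (deriv m) x) ^ 2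
                    + (deriv u x) ^ 2 + (deriv (deriv u) x) ^ 2)) ≤ C) := by
  obtain ⟨D, hD, hDlt⟩ := rpow_lower' α (tC1 + |KV| + 1) hα (by positivity)
  refine ⟨|KV| * (D + C1 + |KV| + 1) + 1, by positivity, ?_⟩
  intro H V hH hVp hV hKVb hA1 hA2 ε hε hε1 u m hs
  have hKV0 : 0 ≤ KV := le_trans (abs_nonneg _) (hKVb 0).1
  have hKVa : |KV| = KV := abs_of_nonneg hKV0
  have hid1 := identity1' H V α ε u m hH hV hVp hs
  have hid2 := identity2' H V α ε u m hH hV hs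
  obtain ⟨⟨hup, hu2⟩, ⟨hmp, hm2⟩, hmpos, heq1, heq2⟩ := hs
  obtain ⟨du, du', cu2⟩ := c2_facts' hu2
  obtain ⟨dm, dm', cm2⟩ := c2_facts' hm2
  obtain ⟨dV, dV', cV2⟩ := c2_facts' hV
  obtain ⟨dH, dH', cH2⟩ := c2_facts' hH
  have cu := du.continuous
  have cu1 := du'.continuous
  have cm := dm.continuous
  have cm1 := dm'.continuous
  have cH := dH.continuous
  have cH1 := dH'.continuous
  have cma : Continuous (fun x => m x ^ α) :=
    cm.rpow_const (fun x => Or.inl (ne_of_gt (hmpos x)))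
  have cma1 : Continuous (fun x => m x ^ (α - 1)) :=
    cm.rpow_const (fun x => Or.inl (ne_of_gt (hmpos x)))
  set IM : ℝ := ∫ x in (0:ℝ)..1, m x with hIMdef
  have hIM0 : 0 ≤ IM := by
    apply intervalIntegral.integral_nonneg (by norm_num)
    intro x _
    exact (hmpos x).le
  -- upper bound for the RHS of identity 2
  have hG_le : (∫ x in (0:ℝ)..1,
      ((H (deriv u x) - deriv u x * deriv H (deriv u x)) * m x
        - H (deriv u x) + V x * (m x - 1)))
      ≤ (tC1 + KV) * IM + (C1 + KV) := by
    have hmono : (∫ x in (0:ℝ)..1,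
        ((H (deriv u x) - deriv u x * deriv H (deriv u x)) * m x
          - H (deriv u x) + V x * (m x - 1)))
        ≤ ∫ x in (0:ℝ)..1, ((tC1 + KV) * m x + (C1 + KV)) := by
      apply intervalIntegral.integral_mono_on (by norm_num)
      · exact (Continuous.intervalIntegrable (by fun_prop) _ _)
      · exact (Continuous.intervalIntegrable (by fun_prop) _ _)
      · intro x _
        have h2 := (hA2 (deriv u x)).1
        have h1 := (hA1 (deriv u x)).1
        have hpow2 : 0 ≤ tC2 * |deriv u x| ^ γ := by positivity
        have hpow1 : 0 ≤ C2 * |deriv u x| ^ γ := by positivity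
        have hm0 := hmpos x
        have hVb := abs_le.1 (hKVb x).1
        nlinarith [mul_le_mul_of_nonneg_right
          (show H (deriv u x) - deriv u x * deriv H (deriv u x) ≤ tC1 by nlinarith)
          (le_of_lt hm0)]
    have hcalc : (∫ x in (0:ℝ)..1, ((tC1 + KV) * m x + (C1 + KV)))
        = (tC1 + KV) * IM + (C1 + KV) := by
      rw [intervalIntegral.integral_add (f := fun x => (tC1 + KV) * m x)
        ((continuous_const.mul cm).intervalIntegrable _ _)
        (intervalIntegrable_const), intervalIntegral.integral_const_mul,
        intervalIntegral.integral_const]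
      simp [hIMdef]
    linarith [hmono, le_of_eq hcalc]
  -- lower bound for the LHS of identity 2
  have hL_ge : (tC1 + KV + 1) * IM - (D + 1) ≤ (∫ x in (0:ℝ)..1,
      (m x ^ α * (m x - 1) + ε * (m x ^ 2 - m x)
        + ε * ((deriv m x) ^ 2 + (u x) ^ 2 + (deriv u x) ^ 2))) := by
    have hmono : (∫ x in (0:ℝ)..1, ((tC1 + KV + 1) * m x - (D + 1)))
        ≤ ∫ x in (0:ℝ)..1,
          (m x ^ α * (m x - 1) + ε * (m x ^ 2 - m x)
            + ε * ((deriv m x) ^ 2 + (u x) ^ 2 + (deriv u x) ^ 2)) := by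
      apply intervalIntegral.integral_mono_on (by norm_num)
      · exact (Continuous.intervalIntegrable (by fun_prop) _ _)
      · exact (Continuous.intervalIntegrable (by fun_prop) _ _)
      · intro x _
        have hm0 := hmpos x
        have hlow := hDlt (m x) hm0
        rw [hKVa] at hlow
        have hq : 0 ≤ m x ^ 2 - m x + 1 / 4 := by nlinarith [sq_nonneg (m x - 1 / 2)]
        have hq2 : -(1:ℝ) / 4 ≤ ε * (m x ^ 2 - m x) := by nlinarith [mul_nonneg hε.le hq]
        have hq3 : 0 ≤ ε * ((deriv m x) ^ 2 + (u x) ^ 2 + (deriv u x) ^ 2) := by positivity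
        nlinarith
    have hcalc : (∫ x in (0:ℝ)..1, ((tC1 + KV + 1) * m x - (D + 1)))
        = (tC1 + KV + 1) * IM - (D + 1) := by
      rw [intervalIntegral.integral_sub (f := fun x => (tC1 + KV + 1) * m x)
        ((continuous_const.mul cm).intervalIntegrable _ _)
        (intervalIntegrable_const), intervalIntegral.integral_const_mul,
        intervalIntegral.integral_const]
      simp [hIMdef]
    linarith [hmono, le_of_eq hcalc]
  -- mass bound
  have hIMB : IM ≤ D + 1 + C1 + KV := by
    have hchain := hL_ge.trans (hid2.le.trans hG_le)
    have hr : (tC1 + KV + 1) * IM = (tC1 + KV) * IM + IM := by ring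
    linarith
  -- bound the second-order quantity
  have hVm : - (∫ x in (0:ℝ)..1, deriv (deriv V) x * m x) ≤ KV * IM := by
    have hmono : (∫ x in (0:ℝ)..1, (-(deriv (deriv V) x * m x)))
        ≤ ∫ x in (0:ℝ)..1, KV * m x := by
      apply intervalIntegral.integral_mono_on (by norm_num)
      · exact (((cV2.mul cm).neg).intervalIntegrable _ _)
      · exact ((continuous_const.mul cm).intervalIntegrable _ _)
      · intro x _
        have hVb := abs_le.1 (hKVb x).2.2
        have hm0 := hmpos x
        nlinarith
    rw [intervalIntegral.integral_neg, intervalIntegral.integral_const_mul] at hmono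
    simpa [hIMdef] using hmono
  have hfinal : (∫ x in (0:ℝ)..1,
      (deriv (deriv H) (deriv u x) * (deriv (deriv u) x) ^ 2 * m x
        + α * m x ^ (α - 1) * (deriv m x) ^ 2
        + ε * ((deriv m x) ^ 2 + (deriv (deriv m) x) ^ 2
            + (deriv u x) ^ 2 + (deriv (deriv u) x) ^ 2)))
      ≤ |KV| * (D + C1 + |KV| + 1) := by
    rw [hid1, hKVa]
    have h1 : KV * IM ≤ KV * (D + 1 + C1 + KV) :=
      mul_le_mul_of_nonneg_left hIMB hKV0
    nlinarith
  -- integrability of individual pieces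
  have cA : Continuous (fun x => deriv (deriv H) (deriv u x) * (deriv (deriv u) x) ^ 2 * m x) := by
    fun_prop
  have cB : Continuous (fun x => α * m x ^ (α - 1) * (deriv m x) ^ 2) := by
    fun_prop
  have cfour : Continuous (fun x => (deriv m x) ^ 2 + (deriv (deriv m) x) ^ 2
      + (deriv u x) ^ 2 + (deriv (deriv u) x) ^ 2) := by
    fun_prop
  have hsplit : (∫ x in (0:ℝ)..1,
      (deriv (deriv H) (deriv u x) * (deriv (deriv u) x) ^ 2 * m x
        + α * m x ^ (α - 1) * (deriv m x) ^ 2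
        + ε * ((deriv m x) ^ 2 + (deriv (deriv m) x) ^ 2
            + (deriv u x) ^ 2 + (deriv (deriv u) x) ^ 2)))
      = (∫ x in (0:ℝ)..1,
          (deriv (deriv H) (deriv u x) * (deriv (deriv u) x) ^ 2 * m x
            + α * m x ^ (α - 1) * (deriv m x) ^ 2))
        + ε * (∫ x in (0:ℝ)..1,
            ((deriv m x) ^ 2 + (deriv (deriv m) x) ^ 2
              + (deriv u x) ^ 2 + (deriv (deriv u) x) ^ 2)) := by
    rw [intervalIntegral.integral_add (f := fun x =>
        deriv (deriv H) (deriv u x) * (deriv (deriv u) x) ^ 2 * m x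
          + α * m x ^ (α - 1) * (deriv m x) ^ 2)
      (g := fun x => ε * ((deriv m x) ^ 2 + (deriv (deriv m) x) ^ 2
              + (deriv u x) ^ 2 + (deriv (deriv u) x) ^ 2)) ((cA.add cB).intervalIntegrable _ _)
      ((continuous_const.mul cfour).intervalIntegrable _ _),
      intervalIntegral.integral_const_mul]
  constructor
  · rw [← hsplit]
    linarith [hfinal]
  · intro hconv
    have hmono : Monotone (deriv H) := by
      have := hconv.monotoneOn_deriv (fun x _ => (dH x))
      exact monotoneOn_univ.1 this
    have hHpp : ∀ p, 0 ≤ deriv (deriv H) p := monotone_deriv_nonneg' hmono dH'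
    have hAnn : 0 ≤ ∫ x in (0:ℝ)..1,
        deriv (deriv H) (deriv u x) * (deriv (deriv u) x) ^ 2 * m x := by
      apply intervalIntegral.integral_nonneg (by norm_num)
      intro x _
      have := hHpp (deriv u x)
      have := hmpos x
      positivity
    have hAB : (∫ x in (0:ℝ)..1,
        (deriv (deriv H) (deriv u x) * (deriv (deriv u) x) ^ 2 * m x
          + α * m x ^ (α - 1) * (deriv m x) ^ 2))
        = (∫ x in (0:ℝ)..1,
            deriv (deriv H) (deriv u x) * (deriv (deriv u) x) ^ 2 * m x)
          + ∫ x in (0:ℝ)..1, α * m x ^ (α - 1) * (deriv m x) ^ 2 := by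
      exact intervalIntegral.integral_add (cA.intervalIntegrable _ _)
        (cB.intervalIntegrable _ _)
    have : (∫ x in (0:ℝ)..1, α * m x ^ (α - 1) * (deriv m x) ^ 2)
        + ε * (∫ x in (0:ℝ)..1,
            ((deriv m x) ^ 2 + (deriv (deriv m) x) ^ 2
              + (deriv u x) ^ 2 + (deriv (deriv u) x) ^ 2))
        ≤ |KV| * (D + C1 + |KV| + 1) := by
      rw [hsplit, hAB] at hfinal
      linarith
    linarith
end
end

section
/- Suppose assumptions (A1), (A2), (A3), (A4), (A6), and (A7) hold, and let ε̄₀ > 0 be as given by the smallness lemma (so that every solution with parameter ε < ε̄₀ satisfies sup|ε(u − u'')| < 1/2). Then for every fixed 0 < ε < ε̄₀ there exists a constant m̄ > 0, depending only on ε, γ, α, the constants of (A1), (A2), (A7), and on the C² norm of V, such that every solution (u, m) of Problem 1 with parameter ε satisfies m(x) > m̄ for all x. -/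
open Set intervalIntegral

noncomputable section

/-- A continuous 1-periodic function attains a global minimum. -/
private lemma periodic_exists_min {f : ℝ → ℝ} (hper : Function.Periodic f 1)
    (hc : Continuous f) : ∃ x₀ : ℝ, ∀ x, f x₀ ≤ f x := by
  obtain ⟨x₀, _, hmin⟩ := isCompact_Icc.exists_isMinOn
    (Set.nonempty_Icc.2 (by norm_num : (0:ℝ) ≤ 1)) hc.continuousOn
  refine ⟨x₀, fun x => ?_⟩
  have h1 : f (x - (⌊x⌋ : ℝ) * 1) = f x := hper.sub_int_mul_eq ⌊x⌋
  have h2 : x - (⌊x⌋ : ℝ) * 1 ∈ Set.Icc (0:ℝ) 1 := by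
    rw [mul_one]
    exact ⟨by linarith [Int.floor_le x], by linarith [Int.lt_floor_add_one x]⟩
  calc f x₀ ≤ f (x - (⌊x⌋ : ℝ) * 1) := hmin h2
    _ = f x := h1

private lemma contDiff_deriv_of_two {f : ℝ → ℝ} (hf : ContDiff ℝ 2 f) :
    ContDiff ℝ 1 (deriv f) := by
  have h2 : ContDiff ℝ ((1 : ℕ) + 1 : ℕ) f := hf
  rw [show (((1 : ℕ) + 1 : ℕ) : WithTop ℕ∞) = (1 : WithTop ℕ∞) + 1 by norm_num] at h2
  exact (contDiff_succ_iff_deriv.mp h2).2.2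

/-- Second-derivative test: at a global minimum of a `C²` function the second
derivative is nonnegative. -/
private lemma second_deriv_nonneg_of_min {f : ℝ → ℝ} (hf : ContDiff ℝ 2 f) {x₀ : ℝ}
    (hmin : ∀ x, f x₀ ≤ f x) : 0 ≤ deriv (deriv f) x₀ := by
  by_contra hneg
  push_neg at hneg
  have hdf : Differentiable ℝ f := hf.differentiable (by norm_num)
  have hdf1 : ContDiff ℝ 1 (deriv f) := contDiff_deriv_of_two hf
  have hg : Differentiable ℝ (deriv f) := hdf1.differentiable one_ne_zero
  have hloc : IsLocalMin f x₀ := Filter.Eventually.of_forall (fun y => hmin y)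
  have hg0 : deriv f x₀ = 0 := hloc.deriv_eq_zero
  have hslope : Filter.Tendsto (slope (deriv f) x₀) (nhdsWithin x₀ {x₀}ᶜ)
      (nhds (deriv (deriv f) x₀)) :=
    hasDerivAt_iff_tendsto_slope.mp (hg x₀).hasDerivAt
  have hev : ∀ᶠ y in nhdsWithin x₀ (Set.Ioi x₀), slope (deriv f) x₀ y < 0 := by
    have h1 : ∀ᶠ y in nhdsWithin x₀ {x₀}ᶜ, slope (deriv f) x₀ y < 0 :=
      hslope.eventually_lt_const hneg
    exact h1.filter_mono (nhdsWithin_mono x₀ (fun y hy => ne_of_gt hy))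
  obtain ⟨b, hb, hsub⟩ := mem_nhdsGT_iff_exists_Ioo_subset.mp hev
  have hderiv_neg : ∀ y ∈ Set.Ioo x₀ b, deriv f y < 0 := by
    intro y hy
    have hs : slope (deriv f) x₀ y < 0 := hsub hy
    rw [slope_def_field, hg0, sub_zero] at hs
    have hy0 : 0 < y - x₀ := sub_pos.2 hy.1
    have := mul_neg_of_neg_of_pos hs hy0
    rwa [div_mul_cancel₀ _ (ne_of_gt hy0)] at this
  have hanti : StrictAntiOn f (Set.Icc x₀ b) :=
    strictAntiOn_of_deriv_neg (convex_Icc _ _) hdf.continuous.continuousOn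
      (fun y hy => hderiv_neg y (by rwa [interior_Icc] at hy))
  have hfb : f b < f x₀ :=
    hanti (Set.left_mem_Icc.2 (le_of_lt hb)) (Set.right_mem_Icc.2 (le_of_lt hb)) hb
  exact absurd (hmin b) (not_le.2 hfb)

/-- Under assumptions (A1)–(A4), (A6), (A7), if `ε̄₀ > 0` is
such that every solution of Problem 1 with parameter `ε < ε̄₀` satisfies
`sup |ε (u - u'')| < 1/2`, then for every fixed `0 < ε < ε̄₀` there is a
constant `m̄ > 0` such that every solution `(u, m)` of Problem 1 with
parameter `ε` satisfies `m(x) > m̄` for all `x`. -/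
theorem lower_bound_on_m
    (α : ℝ) (hα : 0 < α)
    (H V : ℝ → ℝ) (hH : ContDiff ℝ 2 H)
    (hVcont : Continuous V) (hVper : Function.Periodic V 1)
    (γ C1 C2 C3 : ℝ) (hγ : 1 < γ) (hC1 : 0 < C1) (hC2 : 0 < C2) (hC3 : 0 < C3)
    (hA1 : ∀ p : ℝ, -C1 + C2 * |p| ^ γ ≤ H p ∧ H p ≤ C1 + C3 * |p| ^ γ)
    (tC1 tC2 tC3 : ℝ) (htC1 : 0 < tC1) (htC2 : 0 < tC2) (htC3 : 0 < tC3)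
    (hA2 : ∀ p : ℝ, -tC1 + tC2 * |p| ^ γ ≤ p * deriv H p - H p ∧
        p * deriv H p - H p ≤ tC1 + tC3 * |p| ^ γ)
    (hA3 : ContDiff ℝ 2 V)
    (hA4 : ConvexOn ℝ Set.univ H)
    (hA6 : γ < 2)
    (Cbar : ℝ) (hCbar : 0 < Cbar)
    (hA7 : ∀ p : ℝ, |deriv H p| ≤ Cbar * (1 + |p| ^ (γ - 1)))
    (εbar₀ : ℝ) (hεbar₀ : 0 < εbar₀)
    (hsmall : ∀ ε : ℝ, 0 < ε → ε ≤ 1 → ε < εbar₀ →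
      ∀ u m : ℝ → ℝ, SolvesMFG H V α ε u m →
        ∀ x : ℝ, |ε * (u x - deriv (deriv u) x)| < 1 / 2) :
    ∀ ε : ℝ, 0 < ε → ε ≤ 1 → ε < εbar₀ →
      ∃ mbar > 0, ∀ u m : ℝ → ℝ, SolvesMFG H V α ε u m →
        ∀ x : ℝ, mbar < m x := by
  intro ε hε0 hε1 hεb
  -- a uniform bound for `V`
  obtain ⟨Kv, hKv⟩ : ∃ Kv : ℝ, ∀ x, |V x| ≤ Kv := by
    obtain ⟨C, hC⟩ := isCompact_Icc.exists_bound_of_continuousOn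
      (s := Set.Icc (0:ℝ) 1) hVcont.continuousOn
    refine ⟨C, fun x => ?_⟩
    have h1 : V (x - (⌊x⌋ : ℝ) * 1) = V x := hVper.sub_int_mul_eq ⌊x⌋
    have h2 : x - (⌊x⌋ : ℝ) * 1 ∈ Set.Icc (0:ℝ) 1 := by
      rw [mul_one]
      exact ⟨by linarith [Int.floor_le x], by linarith [Int.lt_floor_add_one x]⟩
    have := hC _ h2
    rwa [Real.norm_eq_abs, h1] at this
  have hKv0 : 0 ≤ Kv := le_trans (abs_nonneg _) (hKv 0)
  set D : ℝ := 2 + 1 / (2 * ε) + Kv with hD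
  clear_value D
  have hhalfε : 0 < 1 / (2 * ε) := by positivity
  have hD0 : 0 < D := by rw [hD]; linarith
  set R : ℝ := ((C1 + D) / C2) ^ ((1:ℝ) / γ) with hR
  clear_value R
  have hR0 : 0 ≤ R := by
    rw [hR]; exact Real.rpow_nonneg (by positivity) _
  -- a bound for `H''` on `[-R, R]`
  have hH''cont : Continuous (deriv (deriv H)) :=
    (contDiff_one_iff_deriv.mp (contDiff_deriv_of_two hH)).2
  obtain ⟨Mh0, hMh0⟩ := isCompact_Icc.exists_bound_of_continuousOn
    (s := Set.Icc (-R) R) hH''cont.continuousOn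
  set Mh : ℝ := max Mh0 0 with hMhdef
  clear_value Mh
  have hMhnn : 0 ≤ Mh := hMhdef ▸ le_max_right _ _
  set G : ℝ := 1 + Mh * (1 / ε) with hG
  clear_value G
  have hG1 : 1 ≤ G := by
    have h0 : 0 ≤ Mh * (1 / ε) := by positivity
    rw [hG]; linarith
  have hGpos : 0 < G := lt_of_lt_of_le one_pos hG1
  have hmin0 : 0 < min (1 / (2 * G)) 1 / 2 := by
    have h1 : 0 < 1 / (2 * G) := div_pos one_pos (by linarith)
    have h2 := lt_min h1 one_pos
    linarith
  refine ⟨min (1 / (2 * G)) 1 / 2, hmin0, fun u m hsol => ?_⟩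
  have hsol' := hsol
  obtain ⟨hu, hm, hmpos, hHJB, hFP⟩ := hsol
  -- regularity
  have hud : Differentiable ℝ u := hu.2.differentiable (by norm_num)
  have hud1 : ContDiff ℝ 1 (deriv u) := contDiff_deriv_of_two hu.2
  have hud' : Differentiable ℝ (deriv u) := hud1.differentiable one_ne_zero
  have hmd : Differentiable ℝ m := hm.2.differentiable (by norm_num)
  -- smallness of `u - u''`
  have hsm : ∀ x, |u x - deriv (deriv u) x| ≤ 1 / (2 * ε) := by
    intro x
    have h := hsmall ε hε0 hε1 hεb u m hsol' x
    rw [abs_mul, abs_of_pos hε0, mul_comm] at h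
    have h2 : |u x - deriv (deriv u) x| < 1 / 2 / ε := (lt_div_iff₀ hε0).mpr h
    have h3 : (1:ℝ) / 2 / ε = 1 / (2 * ε) := by ring
    linarith [h2.le.trans_eq h3]
  -- sup bound on `u` by the maximum principle
  have hubd : ∀ x, |u x| ≤ 1 / (2 * ε) := by
    obtain ⟨x₁, hx₁⟩ := periodic_exists_min hu.1 hud.continuous
    obtain ⟨x₂, hx₂⟩ := periodic_exists_min
      (f := fun y => -u y) (fun y => by simp [hu.1 y]) hud.continuous.neg
    have h1 : 0 ≤ deriv (deriv u) x₁ := second_deriv_nonneg_of_min hu.2 hx₁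
    have hnegderiv : deriv (deriv (fun y => -u y)) x₂ = -deriv (deriv u) x₂ := by
      have he : deriv (fun y => -u y) = fun y => -deriv u y := by
        funext y; exact deriv.neg
      rw [he]; exact deriv.neg
    have h2 : deriv (deriv u) x₂ ≤ 0 := by
      have := second_deriv_nonneg_of_min (f := fun y => -u y) hu.2.neg hx₂
      rw [hnegderiv] at this; linarith
    intro x
    have hlow : -(1 / (2 * ε)) ≤ u x := by
      have := (abs_le.1 (hsm x₁)).1
      have hles := hx₁ x
      linarith
    have hup : u x ≤ 1 / (2 * ε) := by
      have := (abs_le.1 (hsm x₂)).2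
      have hles : -u x₂ ≤ -u x := hx₂ x
      linarith
    exact abs_le.2 ⟨hlow, hup⟩
  -- global minimum point of `m`
  obtain ⟨x₀, hx₀⟩ := periodic_exists_min hm.1 hmd.continuous
  have hm'0 : deriv m x₀ = 0 := by
    have hloc : IsLocalMin m x₀ := Filter.Eventually.of_forall (fun y => hx₀ y)
    exact hloc.deriv_eq_zero
  have hm''0 : 0 ≤ deriv (deriv m) x₀ := second_deriv_nonneg_of_min hm.2 hx₀
  have hmain : 1 / (2 * G) < m x₀ ∨ 1 < m x₀ := by
    by_cases hcase : m x₀ ≤ 1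
    · left
      have husm := abs_le.1 (hsm x₀)
      have hub := abs_le.1 (hubd x₀)
      have hu''b : |deriv (deriv u) x₀| ≤ 1 / ε := by
        have h3 : (1:ℝ) / (2 * ε) + 1 / (2 * ε) = 1 / ε := by
          rw [← add_div, div_eq_div_iff (by positivity) (by positivity)]
          ring
        rw [abs_le]
        constructor <;> [linarith [husm.1, husm.2, hub.1, hub.2]; linarith [husm.1, husm.2, hub.1, hub.2]]
      -- HJB at x₀ gives a bound on `H (u' x₀)`
      have hHJB0 := hHJB x₀
      have hmα1 : m x₀ ^ α ≤ 1 :=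
        Real.rpow_le_one (le_of_lt (hmpos x₀)) hcase (le_of_lt hα)
      have hεm : ε * (m x₀ - deriv (deriv m) x₀) ≤ 1 := by
        have h1 : ε * (m x₀ - deriv (deriv m) x₀) ≤ ε * m x₀ :=
          mul_le_mul_of_nonneg_left (by linarith) hε0.le
        have h2 : ε * m x₀ ≤ 1 * 1 :=
          mul_le_mul hε1 hcase (hmpos x₀).le one_pos.le
        linarith
      have hHb : H (deriv u x₀) ≤ D := by
        have hV := abs_le.1 (hKv x₀)
        rw [hD]
        linarith [husm.1]
      have hu'γ : |deriv u x₀| ^ γ ≤ (C1 + D) / C2 := by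
        rw [le_div_iff₀ hC2]
        have h1 := (hA1 (deriv u x₀)).1
        linarith
      have hu'R : |deriv u x₀| ≤ R := by
        have h0 : (0:ℝ) ≤ |deriv u x₀| := abs_nonneg _
        have hγ0 : γ ≠ 0 := by linarith
        have heq : (|deriv u x₀| ^ γ) ^ ((1:ℝ) / γ) = |deriv u x₀| := by
          rw [← Real.rpow_mul h0, mul_one_div, div_self hγ0, Real.rpow_one]
        calc |deriv u x₀| = (|deriv u x₀| ^ γ) ^ ((1:ℝ) / γ) := heq.symm
          _ ≤ ((C1 + D) / C2) ^ ((1:ℝ) / γ) :=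
              Real.rpow_le_rpow (Real.rpow_nonneg h0 γ) hu'γ (by positivity)
          _ = R := hR.symm
      -- bound on `H''` at `u' x₀`
      have hMh : |deriv (deriv H) (deriv u x₀)| ≤ Mh := by
        have hmem : deriv u x₀ ∈ Set.Icc (-R) R := by
          have := abs_le.1 hu'R
          exact Set.mem_Icc.2 ⟨this.1, this.2⟩
        have h5 := hMh0 _ hmem
        rw [Real.norm_eq_abs] at h5
        exact h5.trans (hMhdef ▸ le_max_left _ _)
      -- Fokker–Planck at x₀
      have hFP0 := hFP x₀
      have hter : HasDerivAt (fun y => deriv H (deriv u y) * m y)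
          (deriv (deriv H) (deriv u x₀) * deriv (deriv u) x₀ * m x₀
            + deriv H (deriv u x₀) * deriv m x₀) x₀ := by
        have h1 : HasDerivAt (deriv u) (deriv (deriv u) x₀) x₀ := (hud' x₀).hasDerivAt
        have h2 : HasDerivAt (deriv H) (deriv (deriv H) (deriv u x₀)) (deriv u x₀) :=
          (((contDiff_deriv_of_two hH).differentiable one_ne_zero) _).hasDerivAt
        have h3 : HasDerivAt m (deriv m x₀) x₀ := (hmd x₀).hasDerivAt
        exact (h2.comp x₀ h1).mul h3
      have hterderiv : deriv (fun y => deriv H (deriv u y) * m y) x₀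
          = deriv (deriv H) (deriv u x₀) * deriv (deriv u) x₀ * m x₀ := by
        rw [hter.deriv, hm'0]; ring
      rw [hterderiv] at hFP0
      have hsm0 : ε * (u x₀ - deriv (deriv u) x₀) < 1 / 2 :=
        lt_of_abs_lt (hsmall ε hε0 hε1 hεb u m hsol' x₀)
      have hkey : 1 / 2 < m x₀ * (1 - deriv (deriv H) (deriv u x₀) * deriv (deriv u) x₀) := by
        have hexp : m x₀ * (1 - deriv (deriv H) (deriv u x₀) * deriv (deriv u) x₀)
            = m x₀ - deriv (deriv H) (deriv u x₀) * deriv (deriv u) x₀ * m x₀ := by ring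
        rw [hexp]
        linarith
      have habs : |deriv (deriv H) (deriv u x₀) * deriv (deriv u) x₀| ≤ Mh * (1 / ε) := by
        rw [abs_mul]
        exact mul_le_mul hMh hu''b (abs_nonneg _) hMhnn
      have hle : 1 - deriv (deriv H) (deriv u x₀) * deriv (deriv u) x₀ ≤ G := by
        have := (abs_le.1 habs).1
        rw [hG]; linarith
      have hfin : 1 / 2 < m x₀ * G :=
        hkey.trans_le (mul_le_mul_of_nonneg_left hle (le_of_lt (hmpos x₀)))
      rw [div_lt_iff₀ (by linarith : (0:ℝ) < 2 * G)]
      have hexp2 : m x₀ * (2 * G) = 2 * (m x₀ * G) := by ring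
      rw [hexp2]
      linarith
    · right; linarith
  intro x
  have hmbar : min (1 / (2 * G)) 1 / 2 < m x₀ := by
    rcases hmain with h | h
    · have h1 : min (1 / (2 * G)) 1 / 2 ≤ 1 / (2 * G) / 2 := by
        have := min_le_left (1 / (2 * G)) 1
        linarith
      have h2 : 1 / (2 * G) / 2 < 1 / (2 * G) := by
        have : (0:ℝ) < 1 / (2 * G) := by positivity
        linarith
      linarith
    · have h1 : min (1 / (2 * G)) 1 / 2 ≤ 1 / 2 := by
        have := min_le_right (1 / (2 * G)) 1
        linarith
      linarith
  exact hmbar.trans_le (hx₀ x)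
end
end
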